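/- Let P be a joint pmf on finite sets Y × X with strictly positive marginals P_Y and P_X, and let B = [P_Y]^{-1/2} P [P_X]^{-1/2} be its divergence transition matrix. Consider the simple graph G on the vertex set Y ⊔ X (disjoint union) in which a vertex y ∈ Y is adjacent to a vertex x ∈ X if and only if P(y,x) > 0 (and there are no edges within Y or within X). Then the multiplicity of the eigenvalue 1 of the symmetric positive semidefinite matrix BᵀB (equivalently, the multiplicity of the singular value 1 of B) equals the number of connected components of G. -/
import Mathlib


open Matrix

/-- The divergence transition matrix of a joint pmf `J` on `α × β` with marginals
`Pa` and `Pb`: `B(J) = [Pa]^{-1/2} J [Pb]^{-1/2}`. -/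
noncomputable def DTM {α β : Type*} [Fintype α] [Fintype β] [DecidableEq α] [DecidableEq β]
    (J : Matrix α β ℝ) (Pa : α → ℝ) (Pb : β → ℝ) : Matrix α β ℝ :=
  Matrix.diagonal (fun a => (Real.sqrt (Pa a))⁻¹) * J *
    Matrix.diagonal (fun b => (Real.sqrt (Pb b))⁻¹)

/-- The multiplicity of the singular value `1` of the DTM `B` of a joint pmf `P`
(i.e. the dimension of the eigenspace of `BᵀB` for the eigenvalue `1`) equals the
number of connected components of the bipartite graph on `Y ⊔ X` whose weighted
adjacency matrix is `P`. -/
theorem DTM_singular_value_one_multiplicity {Y X : Type*} [Fintype Y] [Fintype X]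
    [Nonempty Y] [Nonempty X] [DecidableEq Y] [DecidableEq X]
    (P : Matrix Y X ℝ)
    (hP_nonneg : ∀ y x, 0 ≤ P y x) (hP_sum : ∑ y, ∑ x, P y x = 1)
    (PY : Y → ℝ) (hPY : ∀ y, PY y = ∑ x, P y x) (hPY_pos : ∀ y, 0 < PY y)
    (PX : X → ℝ) (hPX : ∀ x, PX x = ∑ y, P y x) (hPX_pos : ∀ x, 0 < PX x)
    (B : Matrix Y X ℝ) (hB : B = DTM P PY PX)
    (G : SimpleGraph (Y ⊕ X))
    (hG : ∀ u v, G.Adj u v ↔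
      ((∃ y x, u = Sum.inl y ∧ v = Sum.inr x ∧ 0 < P y x) ∨
        (∃ y x, u = Sum.inr x ∧ v = Sum.inl y ∧ 0 < P y x))) :
    Module.finrank ℝ (Module.End.eigenspace (Matrix.toLin' (Bᵀ * B)) 1) =
      Nat.card G.ConnectedComponent := by
  classical
  -- basic positivity facts
  have hPXs : ∀ x, (0:ℝ) < Real.sqrt (PX x) := fun x => Real.sqrt_pos.mpr (hPX_pos x)
  have hPYs : ∀ y, (0:ℝ) < Real.sqrt (PY y) := fun y => Real.sqrt_pos.mpr (hPY_pos y)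
  have hsX : ∀ x, Real.sqrt (PX x) ≠ 0 := fun x => ne_of_gt (hPXs x)
  have hsY : ∀ y, Real.sqrt (PY y) ≠ 0 := fun y => ne_of_gt (hPYs y)
  have hXne : ∀ x, PX x ≠ 0 := fun x => ne_of_gt (hPX_pos x)
  have hYne : ∀ y, PY y ≠ 0 := fun y => ne_of_gt (hPY_pos y)
  have hBdef : ∀ y x, B y x = (Real.sqrt (PY y))⁻¹ * P y x * (Real.sqrt (PX x))⁻¹ := by
    intro y x
    rw [hB, DTM, Matrix.mul_diagonal, Matrix.diagonal_mul]
  have hB0 : ∀ y x, P y x = 0 → B y x = 0 := by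
    intro y x h; rw [hBdef, h]; ring
  -- row and column sum identities
  have hrow : ∀ y, ∑ x', B y x' * Real.sqrt (PX x') = Real.sqrt (PY y) := by
    intro y
    have : ∀ x', B y x' * Real.sqrt (PX x') = (Real.sqrt (PY y))⁻¹ * P y x' := by
      intro x'
      rw [hBdef, mul_assoc, inv_mul_cancel₀ (hsX x'), mul_one]
    rw [Finset.sum_congr rfl (fun x' _ => this x'), ← Finset.mul_sum, ← hPY]
    nth_rewrite 2 [← Real.mul_self_sqrt (le_of_lt (hPY_pos y))]
    rw [← mul_assoc, inv_mul_cancel₀ (hsY y), one_mul]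
  have hcol : ∀ x, ∑ y, B y x * Real.sqrt (PY y) = Real.sqrt (PX x) := by
    intro x
    have : ∀ y, B y x * Real.sqrt (PY y) = (Real.sqrt (PX x))⁻¹ * P y x := by
      intro y
      rw [hBdef, show (Real.sqrt (PY y))⁻¹ * P y x * (Real.sqrt (PX x))⁻¹ * Real.sqrt (PY y)
        = (Real.sqrt (PX x))⁻¹ * P y x * ((Real.sqrt (PY y))⁻¹ * Real.sqrt (PY y)) from by ring,
        inv_mul_cancel₀ (hsY y), mul_one]
    rw [Finset.sum_congr rfl (fun y _ => this y), ← Finset.mul_sum, ← hPX]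
    nth_rewrite 2 [← Real.mul_self_sqrt (le_of_lt (hPX_pos x))]
    rw [← mul_assoc, inv_mul_cancel₀ (hsX x), one_mul]
  -- components
  set c : X → G.ConnectedComponent := fun x => G.connectedComponentMk (Sum.inr x) with hc
  have hadj : ∀ y x, 0 < P y x → G.Adj (Sum.inl y) (Sum.inr x) := by
    intro y x h
    exact (hG _ _).mpr (Or.inl ⟨y, x, rfl, rfl, h⟩)
  have hcx : ∀ y x, 0 < P y x →
      c x = G.connectedComponentMk (Sum.inl y) := by
    intro y x h
    exact SimpleGraph.ConnectedComponent.sound ((hadj y x h).symm.reachable)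
  have hcc : ∀ y x x', 0 < P y x → 0 < P y x' → c x = c x' := by
    intro y x x' h h'
    rw [hcx y x h, hcx y x' h']
  have hex : ∀ y, ∃ x, 0 < P y x := by
    intro y
    by_contra hcon
    push_neg at hcon
    have : ∀ x ∈ Finset.univ, P y x = 0 :=
      fun x _ => le_antisymm (hcon x) (hP_nonneg y x)
    have := hPY_pos y
    rw [hPY y, Finset.sum_eq_zero ‹∀ x ∈ Finset.univ, P y x = 0›] at this
    exact lt_irrefl 0 this
  have hcsurj : Function.Surjective c := by
    intro κ
    refine SimpleGraph.ConnectedComponent.ind ?_ κ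
    intro v
    cases v with
    | inl y =>
      obtain ⟨x, hx⟩ := hex y
      exact ⟨x, (hcx y x hx).symm ▸ rfl⟩
    | inr x => exact ⟨x, rfl⟩
  -- the linear map Φ
  set Φ : (G.ConnectedComponent → ℝ) →ₗ[ℝ] (X → ℝ) :=
    { toFun := fun g x => g (c x) * Real.sqrt (PX x)
      map_add' := by intro g g'; funext x; simp [add_mul]
      map_smul' := by intro r g; funext x; simp [mul_assoc] } with hΦ
  have hΦinj : Function.Injective Φ := by
    intro g g' h
    funext κ
    obtain ⟨x, rfl⟩ := hcsurj κ
    have := congrFun h x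
    simp only [hΦ, LinearMap.coe_mk, AddHom.coe_mk] at this
    exact mul_right_cancel₀ (ne_of_gt (hPXs x)) this
  -- forward: Φ g is a fixed vector of BᵀB
  have hforward : ∀ g : G.ConnectedComponent → ℝ, (Bᵀ * B) *ᵥ (Φ g) = Φ g := by
    intro g
    funext x
    have expand : ((Bᵀ * B) *ᵥ (Φ g)) x
        = ∑ x', ∑ y, B y x * B y x' * (g (c x') * Real.sqrt (PX x')) := by
      simp only [Matrix.mulVec, dotProduct, Matrix.mul_apply, Matrix.transpose_apply,
        Finset.sum_mul]
      rfl
    rw [expand]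
    have step : ∀ x' y, B y x * B y x' * (g (c x') * Real.sqrt (PX x'))
        = g (c x) * (B y x * (B y x' * Real.sqrt (PX x'))) := by
      intro x' y
      rcases eq_or_lt_of_le (hP_nonneg y x) with h | h
      · rw [hB0 y x h.symm]; ring
      rcases eq_or_lt_of_le (hP_nonneg y x') with h' | h'
      · rw [hB0 y x' h'.symm]; ring
      · rw [hcc y x' x h' h]; ring
    calc ∑ x', ∑ y, B y x * B y x' * (g (c x') * Real.sqrt (PX x'))
        = ∑ x', ∑ y, g (c x) * (B y x * (B y x' * Real.sqrt (PX x'))) := by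
          exact Finset.sum_congr rfl fun x' _ => Finset.sum_congr rfl fun y _ => step x' y
      _ = g (c x) * ∑ y, B y x * ∑ x', B y x' * Real.sqrt (PX x') := by
          rw [Finset.sum_comm]
          simp_rw [Finset.mul_sum]
      _ = g (c x) * Real.sqrt (PX x) := by
          simp_rw [hrow]
          rw [hcol]
  -- reverse: any fixed vector of BᵀB is in the range of Φ
  have hreverse : ∀ v : X → ℝ, (Bᵀ * B) *ᵥ v = v → ∃ g, Φ g = v := by
    intro v hv
    set f : X → ℝ := fun x => v x * (Real.sqrt (PX x))⁻¹ with hf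
    set gy : Y → ℝ := fun y => (B *ᵥ v) y * (Real.sqrt (PY y))⁻¹ with hgy
    have hfx : ∀ x, f x = v x * (Real.sqrt (PX x))⁻¹ := fun x => rfl
    have hgyy : ∀ y, gy y = (B *ᵥ v) y * (Real.sqrt (PY y))⁻¹ := fun y => rfl
    -- key sum identity pieces
    have hA1 : ∀ y, ∑ x, P y x * f x = Real.sqrt (PY y) * (B *ᵥ v) y := by
      intro y
      have : ∀ x, P y x * f x = Real.sqrt (PY y) * (B y x * v x) := by
        intro x
        rw [hfx x, hBdef, show Real.sqrt (PY y) *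
            ((Real.sqrt (PY y))⁻¹ * P y x * (Real.sqrt (PX x))⁻¹ * v x)
          = (Real.sqrt (PY y) * (Real.sqrt (PY y))⁻¹) * (P y x * (v x * (Real.sqrt (PX x))⁻¹))
            from by ring, mul_inv_cancel₀ (hsY y), one_mul]
      rw [Finset.sum_congr rfl (fun x _ => this x), ← Finset.mul_sum]
      rfl
    have hS1 : ∑ y, ∑ x, P y x * f x ^ 2 = ∑ x, v x ^ 2 := by
      rw [Finset.sum_comm]
      refine Finset.sum_congr rfl fun x _ => ?_
      have : ∀ y, P y x * f x ^ 2 = P y x * (v x ^ 2 * (PX x)⁻¹) := by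
        intro y
        rw [hfx x, mul_pow, ← Real.sqrt_inv, Real.sq_sqrt (inv_nonneg.mpr (le_of_lt (hPX_pos x)))]
      rw [Finset.sum_congr rfl (fun y _ => this y), ← Finset.sum_mul, ← hPX,
        mul_comm (v x ^ 2), ← mul_assoc, mul_inv_cancel₀ (hXne x), one_mul]
    have hS3 : ∑ y, ∑ x, P y x * gy y ^ 2 = ∑ y, (B *ᵥ v) y ^ 2 := by
      refine Finset.sum_congr rfl fun y _ => ?_
      rw [← Finset.sum_mul, ← hPY, hgyy y, mul_pow, ← Real.sqrt_inv,
        Real.sq_sqrt (inv_nonneg.mpr (le_of_lt (hPY_pos y))),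
        mul_comm ((B *ᵥ v) y ^ 2), ← mul_assoc, mul_inv_cancel₀ (hYne y), one_mul]
    have hS2 : ∑ y, ∑ x, P y x * (f x * gy y) = ∑ y, (B *ᵥ v) y ^ 2 := by
      refine Finset.sum_congr rfl fun y _ => ?_
      have : ∑ x, P y x * (f x * gy y) = gy y * ∑ x, P y x * f x := by
        rw [Finset.mul_sum]
        exact Finset.sum_congr rfl fun x _ => by ring
      rw [this, hA1, hgyy y, show (B *ᵥ v) y * (Real.sqrt (PY y))⁻¹ *
          (Real.sqrt (PY y) * (B *ᵥ v) y)
        = ((Real.sqrt (PY y))⁻¹ * Real.sqrt (PY y)) * ((B *ᵥ v) y * (B *ᵥ v) y) from by ring,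
        inv_mul_cancel₀ (hsY y), one_mul, ← pow_two]
    have hBvnorm : ∑ y, (B *ᵥ v) y ^ 2 = ∑ x, v x ^ 2 := by
      have h1 : (B *ᵥ v) ⬝ᵥ (B *ᵥ v) = v ⬝ᵥ ((Bᵀ * B) *ᵥ v) := by
        rw [← Matrix.mulVec_mulVec, Matrix.mulVec_transpose, Matrix.dotProduct_mulVec]
        rw [dotProduct_comm]
      rw [hv] at h1
      have h2 : ∑ y, (B *ᵥ v) y * (B *ᵥ v) y = ∑ x, v x * v x := h1
      have e1 : ∑ y, (B *ᵥ v) y ^ 2 = ∑ y, (B *ᵥ v) y * (B *ᵥ v) y :=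
        Finset.sum_congr rfl fun y _ => pow_two _
      have e2 : ∑ x, v x ^ 2 = ∑ x, v x * v x :=
        Finset.sum_congr rfl fun x _ => pow_two _
      rw [e1, e2]
      exact h2
    have hQ : ∑ y, ∑ x, P y x * (f x - gy y) ^ 2 = 0 := by
      have step : ∑ y, ∑ x, P y x * (f x - gy y) ^ 2
          = (∑ y, ∑ x, P y x * f x ^ 2) - 2 * (∑ y, ∑ x, P y x * (f x * gy y))
            + ∑ y, ∑ x, P y x * gy y ^ 2 := by
        rw [Finset.mul_sum, ← Finset.sum_sub_distrib, ← Finset.sum_add_distrib]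
        refine Finset.sum_congr rfl fun y _ => ?_
        rw [Finset.mul_sum, ← Finset.sum_sub_distrib, ← Finset.sum_add_distrib]
        exact Finset.sum_congr rfl fun x _ => by ring
      rw [step, hS1, hS2, hS3, hBvnorm]; ring
    have hzero : ∀ y x, P y x * (f x - gy y) ^ 2 = 0 := by
      have h1 := (Finset.sum_eq_zero_iff_of_nonneg (fun y _ =>
        Finset.sum_nonneg fun x _ => mul_nonneg (hP_nonneg y x) (sq_nonneg _))).mp hQ
      intro y x
      exact (Finset.sum_eq_zero_iff_of_nonneg (fun x _ =>
        mul_nonneg (hP_nonneg y x) (sq_nonneg _))).mp (h1 y (Finset.mem_univ y)) x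
        (Finset.mem_univ x)
    have hfg : ∀ y x, 0 < P y x → f x = gy y := by
      intro y x h
      have := hzero y x
      rcases mul_eq_zero.mp this with h' | h'
      · exact absurd h' (ne_of_gt h)
      · exact sub_eq_zero.mp ((pow_eq_zero_iff two_ne_zero).mp h')
    -- the function F is constant on components
    set F : Y ⊕ X → ℝ := Sum.elim gy f with hF
    have hFadj : ∀ u w, G.Adj u w → F u = F w := by
      intro u w huw
      rcases (hG u w).mp huw with ⟨y, x, rfl, rfl, h⟩ | ⟨y, x, rfl, rfl, h⟩
      · exact (hfg y x h).symm
      · exact hfg y x h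
    have hFwalk : ∀ u w, G.Walk u w → F u = F w := by
      intro u w p
      induction p with
      | nil => rfl
      | cons h _ ih => exact (hFadj _ _ h).trans ih
    refine ⟨SimpleGraph.ConnectedComponent.lift F (fun u w p _ => hFwalk u w p), ?_⟩
    funext x
    show (SimpleGraph.ConnectedComponent.lift F _) (c x) * Real.sqrt (PX x) = v x
    rw [hc]
    rw [SimpleGraph.ConnectedComponent.lift_mk]
    show f x * Real.sqrt (PX x) = v x
    rw [hfx x, mul_assoc, inv_mul_cancel₀ (hsX x), mul_one]
  -- put it together
  have hE : Module.End.eigenspace (Matrix.toLin' (Bᵀ * B)) 1 = LinearMap.range Φ := by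
    apply le_antisymm
    · intro v hv
      rw [Module.End.mem_eigenspace_iff, Matrix.toLin'_apply, one_smul] at hv
      obtain ⟨g, hg⟩ := hreverse v hv
      exact ⟨g, hg⟩
    · rintro v ⟨g, rfl⟩
      rw [Module.End.mem_eigenspace_iff, Matrix.toLin'_apply, one_smul]
      exact hforward g
  rw [hE, LinearMap.finrank_range_of_inj hΦinj]
  have : Fintype G.ConnectedComponent := Fintype.ofFinite _
  rw [Module.finrank_pi, Nat.card_eq_fintype_card]
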